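/- Let T > 0, let J ∈ ℝ^{n×n} be skew-symmetric with J ≠ 0, and let K : [0,T] → ℝ^{m×n} and D : [0,T] → ℝ^{m×m} be matrix-valued functions such that D(t) is symmetric for every t ∈ [0,T]. Suppose Φ : [0,T] → ℝ^{n×n} is differentiable, Φ(0) = I_n, and Φ'(t) = K(t)ᵀ D(t) K(t) Jᵀ Φ(t) for all t ∈ [0,T]. Then for any norm ‖·‖ on real n×n matrices that is sub-multiplicative and transpose-invariant, ‖Φ(t)‖ ≥ 1 for all t ∈ [0,T]. -/

import Mathlib

open Matrix
open scoped Matrix.Norms.L2Operator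

noncomputable def transCLM (n : ℕ) :
    Matrix (Fin n) (Fin n) ℝ →L[ℝ] Matrix (Fin n) (Fin n) ℝ :=
  LinearMap.toContinuousLinearMap
    { toFun := fun A => Aᵀ
      map_add' := fun A B => Matrix.transpose_add A B
      map_smul' := fun c A => Matrix.transpose_smul c A }

lemma hasDerivWithinAt_transpose {n : ℕ} {f f' : ℝ → Matrix (Fin n) (Fin n) ℝ}
    {s : Set ℝ} {t : ℝ} (h : HasDerivWithinAt f (f' t) s t) :
    HasDerivWithinAt (fun x => (f x)ᵀ) ((f' t)ᵀ) s t := by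
  have := ((transCLM n).hasFDerivAt).comp_hasDerivWithinAt t h
  exact this

/-- non-vanishing backward sensitivity matrices for continuous-time
Hamiltonian DNNs: any sub-multiplicative, transpose-invariant norm of `Φ(t)` is at least `1`. -/
theorem stmt_4 {n m : ℕ} (T : ℝ) (hT : 0 < T)
    (J : Matrix (Fin n) (Fin n) ℝ) (hJskew : Jᵀ = -J) (hJne : J ≠ 0)
    (K : ℝ → Matrix (Fin m) (Fin n) ℝ) (D : ℝ → Matrix (Fin m) (Fin m) ℝ)
    (hD : ∀ t ∈ Set.Icc (0 : ℝ) T, (D t)ᵀ = D t)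
    (Φ : ℝ → Matrix (Fin n) (Fin n) ℝ)
    (hΦ0 : Φ 0 = 1)
    (hΦ : ∀ t ∈ Set.Icc (0 : ℝ) T,
      HasDerivWithinAt Φ ((K t)ᵀ * D t * K t * Jᵀ * Φ t) (Set.Icc (0 : ℝ) T) t)
    (N : Matrix (Fin n) (Fin n) ℝ → ℝ)
    (hN_nonneg : ∀ A, 0 ≤ N A)
    (hN_def : ∀ A, N A = 0 ↔ A = 0)
    (hN_add : ∀ A B, N (A + B) ≤ N A + N B)
    (hN_smul : ∀ (c : ℝ) A, N (c • A) = |c| * N A)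
    (hN_mul : ∀ A B, N (A * B) ≤ N A * N B)
    (hN_transpose : ∀ A, N Aᵀ = N A) :
    ∀ t ∈ Set.Icc (0 : ℝ) T, 1 ≤ N (Φ t) := by
  set G : ℝ → Matrix (Fin n) (Fin n) ℝ := fun t => (Φ t)ᵀ * J * Φ t with hG
  -- G has zero derivative within Icc 0 T
  have hGderiv : ∀ t ∈ Set.Icc (0 : ℝ) T,
      HasDerivWithinAt G 0 (Set.Icc (0 : ℝ) T) t := by
    intro t ht
    have h1 := hΦ t ht
    have h2 : HasDerivWithinAt (fun x => (Φ x)ᵀ)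
        (((K t)ᵀ * D t * K t * Jᵀ * Φ t)ᵀ) (Set.Icc (0 : ℝ) T) t :=
      hasDerivWithinAt_transpose (f' := fun t => (K t)ᵀ * D t * K t * Jᵀ * Φ t) h1
    have h3 := ((h2.mul (hasDerivWithinAt_const t _ J)).mul h1)
    refine h3.congr_deriv ?_
    have hDt := hD t ht
    simp only [Matrix.transpose_mul, Matrix.transpose_transpose, mul_zero, add_zero]
    simp only [Pi.mul_apply, hDt, hJskew, Matrix.neg_mul, Matrix.mul_neg, Matrix.mul_assoc, neg_neg]
    abel
  -- hence G is constant on Icc 0 T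
  have hGcont : ContinuousOn G (Set.Icc (0 : ℝ) T) := fun t ht =>
    (hGderiv t ht).continuousWithinAt
  have hGconst : ∀ t ∈ Set.Icc (0 : ℝ) T, G t = G 0 := by
    intro t ht
    apply constant_of_has_deriv_right_zero hGcont
    · intro x hx
      exact ((hGderiv x ⟨hx.1, hx.2.le⟩).mono_of_mem_nhdsWithin
        (Icc_mem_nhdsGE_of_mem ⟨hx.1, hx.2⟩))
    · exact ht
  have hGt : ∀ t ∈ Set.Icc (0 : ℝ) T, (Φ t)ᵀ * J * Φ t = J := by
    intro t ht
    have := hGconst t ht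
    simpa [hG, hΦ0] using this
  intro t ht
  have hJ : (Φ t)ᵀ * J * Φ t = J := hGt t ht
  have hNJpos : 0 < N J := by
    rcases (hN_nonneg J).lt_or_eq with h | h
    · exact h
    · exact absurd ((hN_def J).mp h.symm) hJne
  have h1 : N ((Φ t)ᵀ * J * Φ t) ≤ N ((Φ t)ᵀ * J) * N (Φ t) := hN_mul _ _
  have h2 : N ((Φ t)ᵀ * J) ≤ N (Φ t) * N J := by
    have := hN_mul (Φ t)ᵀ J
    rwa [hN_transpose] at this
  have hle : N J ≤ N (Φ t) * N J * N (Φ t) := by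
    calc N J = N ((Φ t)ᵀ * J * Φ t) := by rw [hJ]
    _ ≤ N ((Φ t)ᵀ * J) * N (Φ t) := h1
    _ ≤ N (Φ t) * N J * N (Φ t) :=
        mul_le_mul_of_nonneg_right h2 (hN_nonneg _)
  have hx2 : 1 ≤ N (Φ t) * N (Φ t) := by nlinarith [hle, hNJpos]
  nlinarith [hN_nonneg (Φ t), hx2]
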